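/- Let P > 0, A > 0, k_min > 0 and let Ω, μ, T, M, δ be as in the billiard setup. Let k : [0,P] → ℝ be measurable with k(x) ≥ k_min for all x and ∫₀^P k(x) dx = 2π. Let L : Ω → ℝ be measurable and nonnegative with ∫_Ω L dμ = 2πA, and let a : Ω → ℝ be measurable such that for every z = (x,φ) ∈ M one has 0 < a(z) < L(z) and 1/a(z) + 1/(L(T⁻¹ z) − a(T⁻¹ z)) = 2 k(x) / sin φ (the mirror equation). Then δ ≥ (P² − 4πA)·k_min / (8P). -/

import Mathlib

open MeasureTheory Real Set
open scoped ENNReal NNReal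

set_option maxHeartbeats 1600000 in
/-- **Effective Hopf rigidity for planar billiards via the mirror equation, bound (1.3).**
Billiard setup: `Ω = [0,P] × (0,π)`, `μ` has density `sin φ` w.r.t. Lebesgue measure,
`T` is a measurable bijection of `Ω` with measurable inverse `S = T⁻¹`, both preserving `μ`,
`M ⊆ Ω` is measurable and `T`-invariant, and `μ(Ω \ M) = 2Pδ`.
The mirror equation `1/a(z) + 1/(L(T⁻¹z) - a(T⁻¹z)) = 2k(x)/sin φ` holds on `M`. -/
theorem planar_billiard_bound_via_mirror_equation
    (P A kmin : ℝ) (hP : 0 < P) (hA : 0 < A) (hkmin : 0 < kmin)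
    (Ω : Set (ℝ × ℝ)) (hΩ : Ω = Icc (0 : ℝ) P ×ˢ Ioo (0 : ℝ) π)
    (μ : Measure (ℝ × ℝ))
    (hμ : μ = (volume.restrict Ω).withDensity fun z => ENNReal.ofReal (Real.sin z.2))
    (T S : ℝ × ℝ → ℝ × ℝ) (hTmeas : Measurable T) (hSmeas : Measurable S)
    (hTΩ : MapsTo T Ω Ω) (hSΩ : MapsTo S Ω Ω)
    (hST : ∀ z ∈ Ω, S (T z) = z) (hTS : ∀ z ∈ Ω, T (S z) = z)
    (hTμ : MeasurePreserving T μ μ) (hSμ : MeasurePreserving S μ μ)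
    (M : Set (ℝ × ℝ)) (hMmeas : MeasurableSet M) (hMΩ : M ⊆ Ω) (hTM : T '' M = M)
    (δ : ℝ) (hδ0 : 0 ≤ δ) (hδ : μ (Ω \ M) = ENNReal.ofReal (2 * P * δ))
    (k : ℝ → ℝ) (hkmeas : Measurable k) (hkge : ∀ x ∈ Icc (0 : ℝ) P, kmin ≤ k x)
    (hktot : ∫ x in (0 : ℝ)..P, k x = 2 * π)
    (L : ℝ × ℝ → ℝ) (hLmeas : Measurable L) (hLnonneg : ∀ z, 0 ≤ L z)
    (hSantalo : ∫ z, L z ∂μ = 2 * π * A)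
    (a : ℝ × ℝ → ℝ) (hameas : Measurable a)
    (ha : ∀ z ∈ M, 0 < a z ∧ a z < L z)
    (hmirror : ∀ z ∈ M,
      1 / a z + 1 / (L (S z) - a (S z)) = 2 * k z.1 / Real.sin z.2) :
    δ ≥ (P ^ 2 - 4 * π * A) * kmin / (8 * P) := by
  have hπ : (0:ℝ) < π := Real.pi_pos
  have hΩmeas : MeasurableSet Ω := by
    rw [hΩ]; exact measurableSet_Icc.prod measurableSet_Ioo
  -- volume of Ω is finite
  have hvolΩ : volume Ω < ⊤ := by
    rw [hΩ, Measure.volume_eq_prod, Measure.prod_prod, Real.volume_Icc, Real.volume_Ioo]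
    exact ENNReal.mul_lt_top ENNReal.ofReal_lt_top ENNReal.ofReal_lt_top
  -- μ vanishes outside Ω
  have hμcompl : μ Ωᶜ = 0 := by
    rw [hμ, withDensity_apply _ hΩmeas.compl, Measure.restrict_restrict hΩmeas.compl]
    simp
  have hae : ∀ᵐ z ∂μ, z ∈ Ω := by
    rw [ae_iff]
    exact hμcompl
  -- μ is a finite measure
  haveI hfin : IsFiniteMeasure μ := by
    constructor
    rw [hμ, withDensity_apply _ MeasurableSet.univ, Measure.restrict_univ]
    calc ∫⁻ z, ENNReal.ofReal (Real.sin z.2) ∂(volume.restrict Ω)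
        ≤ ∫⁻ _, 1 ∂(volume.restrict Ω) :=
          lintegral_mono fun z => ENNReal.ofReal_le_one.mpr (Real.sin_le_one _)
      _ = volume Ω := by simp
      _ < ⊤ := hvolΩ
  haveI hfin' : IsFiniteMeasure (volume.restrict Ω) :=
    ⟨by rw [Measure.restrict_apply_univ]; exact hvolΩ⟩
  -- S maps M to M, and no point of Ω \ M into M
  have hMS : ∀ z ∈ M, S z ∈ M := by
    intro z hz
    have hz' : z ∈ T '' M := by rw [hTM]; exact hz
    obtain ⟨w, hw, rfl⟩ := hz'
    rw [hST w (hMΩ hw)]; exact hw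
  have hiff : ∀ z ∈ Ω, (S z ∈ M ↔ z ∈ M) := by
    intro z hz
    constructor
    · intro h
      have : T (S z) ∈ T '' M := mem_image_of_mem T h
      rwa [hTS z hz, hTM] at this
    · exact hMS z
  -- transfer lemma: integrals over M are S-invariant
  have htransfer : ∀ f : ℝ × ℝ → ℝ, Measurable f →
      ∫ z in M, f (S z) ∂μ = ∫ z in M, f z ∂μ := by
    intro f hf
    have hind : Measurable (M.indicator f) := hf.indicator hMmeas
    have h1 : ∫ z, M.indicator f z ∂μ = ∫ z, M.indicator f (S z) ∂μ := by
      conv_lhs => rw [← hSμ.map_eq]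
      exact integral_map hSmeas.aemeasurable
        (by rw [hSμ.map_eq]; exact hind.aestronglyMeasurable)
    have h2 : (fun z => M.indicator f (S z)) =ᵐ[μ]
        M.indicator (fun z => f (S z)) := by
      filter_upwards [hae] with z hz
      by_cases hzM : z ∈ M
      · rw [indicator_of_mem hzM, indicator_of_mem (hMS z hzM)]
      · rw [indicator_of_notMem hzM,
          indicator_of_notMem (fun h => hzM ((hiff z hz).1 h))]
    rw [← integral_indicator hMmeas, ← integral_indicator hMmeas, h1]
    exact integral_congr_ae h2.symm
  -- integrability of L and k
  have hLint : Integrable L μ := by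
    by_contra h
    rw [integral_undef h] at hSantalo
    nlinarith
  have hkint : IntervalIntegrable k volume 0 P := by
    by_contra h
    rw [intervalIntegral.integral_undef h] at hktot
    nlinarith
  -- the comparison function g
  set g : ℝ × ℝ → ℝ := fun z => 2 * Real.sin z.2 / k z.1 with hg
  have hgmeas : Measurable g :=
    (measurable_const.mul (Real.measurable_sin.comp measurable_snd)).div
      (hkmeas.comp measurable_fst)
  have hzΩ : ∀ z ∈ Ω, z.1 ∈ Icc (0:ℝ) P ∧ 0 < Real.sin z.2 ∧ Real.sin z.2 ≤ 1 := by
    intro z hz; rw [hΩ] at hz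
    exact ⟨hz.1, Real.sin_pos_of_pos_of_lt_pi hz.2.1 hz.2.2, Real.sin_le_one _⟩
  have hkpos : ∀ z ∈ Ω, 0 < k z.1 := fun z hz =>
    lt_of_lt_of_le hkmin (hkge _ (hzΩ z hz).1)
  have hgbound : ∀ z ∈ Ω, 0 ≤ g z ∧ g z ≤ 2 / kmin := by
    intro z hz
    obtain ⟨h1, h2, h3⟩ := hzΩ z hz
    have h4 := hkpos z hz
    refine ⟨div_nonneg (by nlinarith) h4.le, ?_⟩
    exact div_le_div₀ (by norm_num) (by nlinarith) hkmin (hkge _ h1)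
  have hgint : Integrable g μ := by
    refine Integrable.mono' (integrable_const (2 / kmin))
      hgmeas.aestronglyMeasurable ?_
    filter_upwards [hae] with z hz
    rw [Real.norm_eq_abs, abs_of_nonneg (hgbound z hz).1]
    exact (hgbound z hz).2
  -- pointwise mirror-equation inequality on M
  have hkey : ∀ z ∈ M, g z ≤ a z + (L (S z) - a (S z)) := by
    intro z hz
    have hzΩ' := hMΩ hz
    have hSzM := hMS z hz
    have hu := (ha z hz).1
    have hv : 0 < L (S z) - a (S z) := sub_pos.mpr (ha (S z) hSzM).2
    have hs := (hzΩ z hzΩ').2.1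
    have hk := hkpos z hzΩ'
    have hm := hmirror z hz
    rw [hg]
    simp only []
    rw [div_le_iff₀ hk]
    have key : Real.sin z.2 * (L (S z) - a (S z)) + Real.sin z.2 * a z
        = 2 * k z.1 * (a z * (L (S z) - a (S z))) := by
      have := hm
      field_simp at this
      linarith
    nlinarith [sq_nonneg (a z - (L (S z) - a (S z))), mul_pos hu hv,
      mul_pos (mul_pos hu hv) hs, mul_pos hu hs, mul_pos hv hs]
  -- integrability on M
  have haeM : ∀ᵐ z ∂μ.restrict M, z ∈ M := ae_restrict_mem hMmeas
  have haM : IntegrableOn a M μ := by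
    refine Integrable.mono hLint.integrableOn hameas.aestronglyMeasurable ?_
    filter_upwards [haeM] with z hz
    rw [Real.norm_eq_abs, Real.norm_eq_abs, abs_of_pos (ha z hz).1,
      abs_of_nonneg (hLnonneg z)]
    exact (ha z hz).2.le
  have hLSint : Integrable (fun z => L (S z)) μ :=
    (hSμ.integrable_comp hLmeas.aestronglyMeasurable).mpr hLint
  have haSM : IntegrableOn (fun z => a (S z)) M μ := by
    refine Integrable.mono hLSint.integrableOn
      ((hameas.comp hSmeas)).aestronglyMeasurable ?_
    filter_upwards [haeM] with z hz
    have hSz := hMS z hz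
    rw [Real.norm_eq_abs, Real.norm_eq_abs, abs_of_pos (ha _ hSz).1,
      abs_of_nonneg (hLnonneg _)]
    exact (ha _ hSz).2.le
  -- ∫_M g ≤ ∫_M L
  have hML : ∫ z in M, g z ∂μ ≤ ∫ z in M, L z ∂μ := by
    have hsub : IntegrableOn (fun z => L (S z) - a (S z)) M μ :=
      hLSint.integrableOn.sub haSM
    have h1 : ∫ z in M, g z ∂μ ≤ ∫ z in M, (a z + (L (S z) - a (S z))) ∂μ :=
      setIntegral_mono_on hgint.integrableOn (haM.add hsub) hMmeas hkey
    have h2 : ∫ z in M, (a z + (L (S z) - a (S z))) ∂μ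
        = ∫ z in M, a z ∂μ + (∫ z in M, L (S z) ∂μ - ∫ z in M, a (S z) ∂μ) := by
      rw [integral_add haM hsub, integral_sub hLSint.integrableOn haSM]
    rw [h2, htransfer L hLmeas, htransfer a hameas] at h1
    linarith
  -- split ∫ g over M and Ω \ M
  have hrestrΩ : μ.restrict Ω = μ :=
    Measure.restrict_eq_self_of_ae_mem hae
  have hsplit : ∫ z, g z ∂μ = ∫ z in M, g z ∂μ + ∫ z in Ω \ M, g z ∂μ := by
    rw [← setIntegral_union (disjoint_sdiff_right) (hΩmeas.diff hMmeas)
      hgint.integrableOn hgint.integrableOn, union_diff_cancel hMΩ, hrestrΩ]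
  -- bound on Ω \ M
  have hΩM : ∫ z in Ω \ M, g z ∂μ ≤ 2 / kmin * (2 * P * δ) := by
    have h1 : ∫ z in Ω \ M, g z ∂μ ≤ ∫ _ in Ω \ M, (2 / kmin) ∂μ :=
      setIntegral_mono_on hgint.integrableOn (integrable_const _)
        (hΩmeas.diff hMmeas) (fun z hz => (hgbound z hz.1).2)
    rw [setIntegral_const, measureReal_def, hδ, smul_eq_mul,
      ENNReal.toReal_ofReal (by positivity)] at h1
    linarith
  -- main lower bound: ∫ g ≥ P²/2
  set c : ℝ := P / (2 * π) with hc
  have hmain : P ^ 2 / 2 ≤ ∫ z, g z ∂μ := by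
    have h0 : ∫ z, g z ∂μ = ∫ z in Ω, Real.sin z.2 * g z := by
      rw [hμ]
      have hde : (fun z : ℝ × ℝ => ENNReal.ofReal (Real.sin z.2))
          = fun z : ℝ × ℝ => ((Real.sin z.2).toNNReal : ℝ≥0∞) := rfl
      rw [hde, integral_withDensity_eq_integral_smul
        (measurable_snd.sin.real_toNNReal) g]
      refine setIntegral_congr_fun hΩmeas fun z hz => ?_
      simp [NNReal.smul_def, Real.coe_toNNReal _ (hzΩ z hz).2.1.le]
    set F : ℝ × ℝ → ℝ := fun z => (2 * c - c ^ 2 * k z.1) * (2 * Real.sin z.2 ^ 2)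
      with hF
    have hpt : ∀ z ∈ Ω, F z ≤ Real.sin z.2 * g z := by
      intro z hz
      have h2 := hkpos z hz
      have hs := (hzΩ z hz).2.1
      have hinv : 2 * c - c ^ 2 * k z.1 ≤ 1 / k z.1 := by
        rw [le_div_iff₀ h2]
        nlinarith [sq_nonneg (1 - c * k z.1)]
      calc F z ≤ (1 / k z.1) * (2 * Real.sin z.2 ^ 2) :=
            mul_le_mul_of_nonneg_right hinv (by positivity)
        _ = Real.sin z.2 * (2 * Real.sin z.2 / k z.1) := by
            field_simp
    have hkIcc : IntegrableOn k (Icc (0:ℝ) P) volume := by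
      rw [integrableOn_Icc_iff_integrableOn_Ioc]
      exact (intervalIntegrable_iff_integrableOn_Ioc_of_le hP.le).mp hkint
    have hf1 : IntegrableOn (fun x => 2 * c - c ^ 2 * k x) (Icc (0:ℝ) P) volume := by
      exact (integrableOn_const (by
        rw [Real.volume_Icc]; exact ENNReal.ofReal_ne_top)).sub (hkIcc.const_mul _)
    have hf2 : IntegrableOn (fun φ => 2 * Real.sin φ ^ 2) (Ioo (0:ℝ) π) volume :=
      ((continuous_const.mul ((Real.continuous_sin).pow 2)).integrableOn_Icc).mono_set
        Ioo_subset_Icc_self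
    have hFint : IntegrableOn F Ω volume := by
      rw [hΩ, IntegrableOn, Measure.volume_eq_prod, ← Measure.prod_restrict]
      exact hf1.mul_prod hf2
    have hG : IntegrableOn (fun z : ℝ × ℝ => Real.sin z.2 * g z) Ω volume := by
      refine Integrable.mono' (integrable_const (2 / kmin))
        (((Real.measurable_sin.comp measurable_snd)).mul hgmeas).aestronglyMeasurable ?_
      filter_upwards [ae_restrict_mem hΩmeas] with z hz
      have hs := (hzΩ z hz).2.1
      rw [Real.norm_eq_abs, abs_of_nonneg (mul_nonneg hs.le (hgbound z hz).1)]
      nlinarith [(hgbound z hz).1, (hgbound z hz).2, (hzΩ z hz).2.2, hs]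
    have hle : ∫ z in Ω, F z ≤ ∫ z in Ω, Real.sin z.2 * g z :=
      setIntegral_mono_on hFint hG hΩmeas hpt
    have hv1 : ∫ x in Icc (0:ℝ) P, (2 * c - c ^ 2 * k x) = 2 * c * P - c ^ 2 * (2 * π) := by
      rw [MeasureTheory.integral_Icc_eq_integral_Ioc,
        ← intervalIntegral.integral_of_le hP.le,
        intervalIntegral.integral_sub intervalIntegrable_const (hkint.const_mul _),
        intervalIntegral.integral_const, intervalIntegral.integral_const_mul, hktot]
      simp [smul_eq_mul]; ring
    have hv2 : ∫ φ in Ioo (0:ℝ) π, 2 * Real.sin φ ^ 2 = π := by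
      rw [← MeasureTheory.integral_Ioc_eq_integral_Ioo,
        ← intervalIntegral.integral_of_le hπ.le,
        intervalIntegral.integral_const_mul, integral_sin_sq]
      simp [Real.sin_pi]
      ring
    have hFval : ∫ z in Ω, F z = (2 * c * P - c ^ 2 * (2 * π)) * π := by
      rw [hΩ, Measure.volume_eq_prod]
      simp only [hF]
      rw [setIntegral_prod_mul (fun x => 2 * c - c ^ 2 * k x)
        (fun φ => 2 * Real.sin φ ^ 2), hv1, hv2]
    have hcval : (2 * c * P - c ^ 2 * (2 * π)) * π = P ^ 2 / 2 := by
      rw [hc]; field_simp; ring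
    calc P ^ 2 / 2 = ∫ z in Ω, F z := by rw [hFval, hcval]
      _ ≤ ∫ z in Ω, Real.sin z.2 * g z := hle
      _ = ∫ z, g z ∂μ := h0.symm
  -- assemble
  have hMle : ∫ z in M, L z ∂μ ≤ ∫ z, L z ∂μ :=
    setIntegral_le_integral hLint (Filter.Eventually.of_forall hLnonneg)
  have hfinal : P ^ 2 / 2 - 2 / kmin * (2 * P * δ) ≤ 2 * π * A := by
    rw [← hSantalo]
    have := hsplit
    linarith [hmain, hΩM, hML, hMle]
  have h9 : (P ^ 2 / 2 - 2 * π * A) * kmin ≤ 2 / kmin * (2 * P * δ) * kmin :=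
    mul_le_mul_of_nonneg_right (by linarith) hkmin.le
  have h10 : 2 / kmin * (2 * P * δ) * kmin = 4 * P * δ := by
    field_simp; ring
  rw [ge_iff_le, div_le_iff₀ (by positivity : (0:ℝ) < 8 * P)]
  nlinarith [h9, h10]
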